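/- arXiv:2308.11464 — 3 statements merged into one kernel-verified Lean document; each statement's English description precedes it below -/
import Mathlib

section
/- Let m and n be finite index types and let G₀, G_k be real m×n matrices with G₀ ≠ 0. Set a = trace(G₀ᵀG₀) and b = trace(G₀ᵀG_k), and define G_opt = G_k if b ≥ 0, and G_opt = G_k − (b/a)·G₀ if b < 0. Then trace(G_optᵀG₀) ≥ 0, and for every real m×n matrix G with trace(GᵀG₀) ≥ 0 one has trace((G_k − G_opt)ᵀ(G_k − G_opt)) ≤ trace((G_k − G)ᵀ(G_k − G)), i.e. ‖G_k − G_opt‖_F ≤ ‖G_k − G‖_F. -/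
open Matrix

private lemma tr_symm {m n : Type*} [Fintype m] [Fintype n]
    (A B : Matrix m n ℝ) : (Aᵀ * B).trace = (Bᵀ * A).trace := by
  rw [← Matrix.trace_transpose (Aᵀ * B), Matrix.transpose_mul, Matrix.transpose_transpose]

private lemma tr_self_nonneg {m n : Type*} [Fintype m] [Fintype n]
    (A : Matrix m n ℝ) : 0 ≤ (Aᵀ * A).trace := by
  rw [Matrix.trace]
  apply Finset.sum_nonneg
  intro j _
  simp only [Matrix.diag_apply, Matrix.mul_apply, Matrix.transpose_apply]
  exact Finset.sum_nonneg fun i _ => mul_self_nonneg _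

private lemma tr_self_pos {m n : Type*} [Fintype m] [Fintype n]
    (A : Matrix m n ℝ) (hA : A ≠ 0) : 0 < (Aᵀ * A).trace := by
  rcases (tr_self_nonneg A).lt_or_eq with h | h
  · exact h
  exfalso; apply hA
  ext i j
  have h0 : ∀ k ∈ Finset.univ, (0:ℝ) ≤ ((Aᵀ * A).diag k) := fun k _ => by
    simp only [Matrix.diag_apply, Matrix.mul_apply, Matrix.transpose_apply]
    exact Finset.sum_nonneg fun i _ => mul_self_nonneg _
  have := (Finset.sum_eq_zero_iff_of_nonneg h0).mp h.symm j (Finset.mem_univ j)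
  simp only [Matrix.diag_apply, Matrix.mul_apply, Matrix.transpose_apply] at this
  have h1 : ∀ k ∈ (Finset.univ : Finset m), (0:ℝ) ≤ A k j * A k j :=
    fun k _ => mul_self_nonneg _
  have := (Finset.sum_eq_zero_iff_of_nonneg h1).mp this i (Finset.mem_univ i)
  have : A i j = 0 := by nlinarith [sq_nonneg (A i j)]
  simpa using this

theorem inco_divergence_alleviation_matrix
    {m n : Type*} [Fintype m] [Fintype n] [DecidableEq n]
    (G₀ Gk : Matrix m n ℝ) (hG₀ : G₀ ≠ 0)
    (a b : ℝ) (ha : a = (G₀ᵀ * G₀).trace) (hb : b = (G₀ᵀ * Gk).trace)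
    (Gopt : Matrix m n ℝ)
    (hopt : Gopt = if 0 ≤ b then Gk else Gk - (b / a) • G₀) :
    0 ≤ (Goptᵀ * G₀).trace ∧
      ∀ G : Matrix m n ℝ, 0 ≤ (Gᵀ * G₀).trace →
        ((Gk - Gopt)ᵀ * (Gk - Gopt)).trace ≤ ((Gk - G)ᵀ * (Gk - G)).trace := by
  have hapos : 0 < a := ha ▸ tr_self_pos G₀ hG₀
  -- Cauchy–Schwarz style bound: for any D, (tr(Dᵀ G₀))² ≤ a * tr(Dᵀ D)
  have key : ∀ D : Matrix m n ℝ, ((Dᵀ * G₀).trace)^2 ≤ a * (Dᵀ * D).trace := by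
    intro D
    set t : ℝ := (Dᵀ * G₀).trace with ht
    have h0 := tr_self_nonneg (D - (t / a) • G₀)
    have hexp : ((D - (t / a) • G₀)ᵀ * (D - (t / a) • G₀)).trace
        = (Dᵀ * D).trace - 2 * (t/a) * t + (t/a)^2 * a := by
      simp only [Matrix.transpose_sub, Matrix.transpose_smul, Matrix.sub_mul,
        Matrix.mul_sub, Matrix.smul_mul, Matrix.mul_smul, Matrix.trace_sub,
        Matrix.trace_smul, smul_eq_mul]
      have h1 : (G₀ᵀ * D).trace = t := by rw [ht, tr_symm]
      rw [h1, ha]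
      ring
    rw [hexp] at h0
    have : (Dᵀ * D).trace - 2 * (t/a) * t + (t/a)^2 * a
        = (Dᵀ * D).trace - t^2 / a := by field_simp; ring
    rw [this] at h0
    have h2 : t^2/a ≤ (Dᵀ*D).trace := by linarith
    have h3 := mul_le_mul_of_nonneg_right h2 hapos.le
    rw [div_mul_cancel₀ _ hapos.ne'] at h3
    nlinarith
  by_cases hbpos : 0 ≤ b
  · rw [hopt, if_pos hbpos]
    constructor
    · rw [tr_symm, ← hb]; exact hbpos
    · intro G _
      simpa using tr_self_nonneg (Gk - G)
  · rw [hopt, if_neg hbpos]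
    push_neg at hbpos
    constructor
    · have : ((Gk - (b / a) • G₀)ᵀ * G₀).trace = b - (b/a) * a := by
        simp only [Matrix.transpose_sub, Matrix.transpose_smul, Matrix.sub_mul,
          Matrix.smul_mul, Matrix.trace_sub, Matrix.trace_smul, smul_eq_mul]
        rw [tr_symm Gk G₀, ← hb, ← ha]
      rw [this]
      field_simp; norm_num
    · intro G hG
      have hsimp : Gk - (Gk - (b / a) • G₀) = (b / a) • G₀ := by
        abel
      rw [hsimp]
      have hlhs : (((b / a) • G₀)ᵀ * ((b / a) • G₀)).trace = (b/a)^2 * a := by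
        simp only [Matrix.transpose_smul, Matrix.smul_mul, Matrix.mul_smul,
          Matrix.trace_smul, smul_eq_mul, ← ha]
        ring
      rw [hlhs]
      have hDG : ((Gk - G)ᵀ * G₀).trace = b - (Gᵀ * G₀).trace := by
        simp only [Matrix.transpose_sub, Matrix.sub_mul, Matrix.trace_sub]
        rw [tr_symm Gk G₀, ← hb]
      have hk := key (Gk - G)
      rw [hDG] at hk
      have hb2 : b^2 ≤ (b - (Gᵀ * G₀).trace)^2 := by nlinarith
      have : (b/a)^2 * a = b^2 / a := by field_simp
      rw [this]
      rw [div_le_iff₀ hapos]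
      nlinarith
end

section
/- Let H be a real inner product space, f : H → ℝ differentiable with K-Lipschitz gradient (K ≥ 0), (Ω, μ) a probability space, η ∈ ℝ, σ ≥ 0, and E a natural number. Let W₀, …, W_E : Ω → H and G₀, …, G_{E−1} : Ω → H satisfy W_{e+1}(ω) = W_e(ω) − η·G_e(ω) for all ω and all e < E, where for each e the functions ω ↦ f(W_e(ω)), ω ↦ ‖∇f(W_e(ω))‖², ω ↦ ‖G_e(ω)‖², and ω ↦ ⟪∇f(W_e(ω)), G_e(ω)⟫ are integrable. Assume for each e < E: (i) ∫ ⟪∇f(W_e(ω)), G_e(ω)⟫ dμ = ∫ ‖∇f(W_e(ω))‖² dμ, and (ii) ∫ ‖G_e(ω) − ∇f(W_e(ω))‖² dμ ≤ σ². Then ∫ f(W_E(ω)) dμ ≤ ∫ f(W₀(ω)) dμ − (η − K·η²/2)·Σ_{e=0}^{E−1} ∫ ‖∇f(W_e(ω))‖² dμ + (K·E·η²/2)·σ². -/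
open scoped RealInnerProductSpace
open MeasureTheory Finset

private lemma line_hasDerivAt {H : Type*} [NormedAddCommGroup H] [InnerProductSpace ℝ H]
    [CompleteSpace H]
    (f : H → ℝ) (f' : H → H) (hdiff : ∀ x : H, HasGradientAt f (f' x) x)
    (x v : H) (t : ℝ) :
    HasDerivAt (fun s : ℝ => f (x + s • v)) ⟪f' (x + t • v), v⟫ t := by
  have hline : HasDerivAt (fun s : ℝ => x + s • v) v t := by
    simpa using ((hasDerivAt_id t).smul_const v).const_add x
  have hF := (hdiff (x + t • v)).hasFDerivAt
  have := hF.comp_hasDerivAt t hline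
  exact this

private lemma smooth_descent {H : Type*} [NormedAddCommGroup H] [InnerProductSpace ℝ H]
    [CompleteSpace H]
    (f : H → ℝ) (f' : H → H) (K : ℝ) (hK : 0 ≤ K)
    (hdiff : ∀ x : H, HasGradientAt f (f' x) x)
    (hlip : ∀ x y : H, ‖f' x - f' y‖ ≤ K * ‖x - y‖) (x v : H) :
    f (x + v) ≤ f x + ⟪f' x, v⟫ + K / 2 * ‖v‖ ^ 2 := by
  set φ : ℝ → ℝ := fun t => f (x + t • v) - t * ⟪f' x, v⟫ - K / 2 * ‖v‖ ^ 2 * t ^ 2 with hφ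
  have hder : ∀ t : ℝ, HasDerivAt φ
      (⟪f' (x + t • v), v⟫ - ⟪f' x, v⟫ - K * ‖v‖ ^ 2 * t) t := by
    intro t
    have h1 := line_hasDerivAt f f' hdiff x v t
    have h2 : HasDerivAt (fun s : ℝ => s * ⟪f' x, v⟫) ⟪f' x, v⟫ t := by
      simpa using (hasDerivAt_id t).mul_const ⟪f' x, v⟫
    have h3 : HasDerivAt (fun s : ℝ => K / 2 * ‖v‖ ^ 2 * s ^ 2)
        (K * ‖v‖ ^ 2 * t) t := by
      have := ((hasDerivAt_pow 2 t).const_mul (K / 2 * ‖v‖ ^ 2))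
      exact this.congr_deriv (by rw [show (2:ℕ) - 1 = 1 from rfl, pow_one]; push_cast; ring)
    exact (h1.sub h2).sub h3
  have hanti : AntitoneOn φ (Set.Icc (0:ℝ) 1) := by
    apply antitoneOn_of_deriv_nonpos (convex_Icc 0 1)
    · exact fun t _ => ((hder t).continuousAt).continuousWithinAt
    · exact fun t _ => ((hder t).differentiableAt).differentiableWithinAt
    · intro t ht
      rw [interior_Icc] at ht
      rw [(hder t).deriv]
      have key : ⟪f' (x + t • v) - f' x, v⟫ ≤ K * ‖v‖ ^ 2 * t := by
        calc ⟪f' (x + t • v) - f' x, v⟫ ≤ ‖f' (x + t • v) - f' x‖ * ‖v‖ :=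
              real_inner_le_norm _ _
          _ ≤ (K * ‖x + t • v - x‖) * ‖v‖ := by
              apply mul_le_mul_of_nonneg_right (hlip _ _) (norm_nonneg v)
          _ = K * ‖v‖ ^ 2 * t := by
              rw [add_sub_cancel_left, norm_smul, Real.norm_eq_abs,
                abs_of_nonneg ht.1.le]
              ring
      have : ⟪f' (x + t • v), v⟫ - ⟪f' x, v⟫ = ⟪f' (x + t • v) - f' x, v⟫ := by
        rw [inner_sub_left]
      linarith
  have h01 := hanti (Set.left_mem_Icc.2 zero_le_one) (Set.right_mem_Icc.2 zero_le_one)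
    zero_le_one
  simp only [hφ, zero_smul, one_smul, add_zero, zero_mul, sub_zero, zero_pow, mul_zero,
    one_mul, one_pow, mul_one] at h01
  linarith

theorem per_round_progress
    {H : Type*} [NormedAddCommGroup H] [InnerProductSpace ℝ H] [CompleteSpace H]
    {Ω : Type*} [MeasurableSpace Ω] (μ : Measure Ω) [IsProbabilityMeasure μ]
    (f : H → ℝ) (f' : H → H) (K : ℝ) (hK : 0 ≤ K)
    (hdiff : ∀ x : H, HasGradientAt f (f' x) x)
    (hlip : ∀ x y : H, ‖f' x - f' y‖ ≤ K * ‖x - y‖)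
    (η σ : ℝ) (hσ : 0 ≤ σ) (E : ℕ)
    (W : ℕ → Ω → H) (G : ℕ → Ω → H)
    (hstep : ∀ ω : Ω, ∀ e < E, W (e + 1) ω = W e ω - η • G e ω)
    (hf_int : ∀ e ≤ E, Integrable (fun ω => f (W e ω)) μ)
    (hgrad_int : ∀ e < E, Integrable (fun ω => ‖f' (W e ω)‖ ^ 2) μ)
    (hG_int : ∀ e < E, Integrable (fun ω => ‖G e ω‖ ^ 2) μ)
    (hinner_int : ∀ e < E, Integrable (fun ω => ⟪f' (W e ω), G e ω⟫) μ)
    (hunbiased : ∀ e < E,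
      ∫ ω, ⟪f' (W e ω), G e ω⟫ ∂μ = ∫ ω, ‖f' (W e ω)‖ ^ 2 ∂μ)
    (hvar : ∀ e < E, ∫ ω, ‖G e ω - f' (W e ω)‖ ^ 2 ∂μ ≤ σ ^ 2) :
    ∫ ω, f (W E ω) ∂μ ≤
      ∫ ω, f (W 0 ω) ∂μ -
        (η - K * η ^ 2 / 2) * ∑ e ∈ range E, ∫ ω, ‖f' (W e ω)‖ ^ 2 ∂μ +
        (K * E * η ^ 2 / 2) * σ ^ 2 := by
  -- per-step integral inequality
  have hstep_int : ∀ e < E,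
      ∫ ω, f (W (e + 1) ω) ∂μ ≤
        ∫ ω, f (W e ω) ∂μ -
          (η - K * η ^ 2 / 2) * ∫ ω, ‖f' (W e ω)‖ ^ 2 ∂μ +
          (K * η ^ 2 / 2) * σ ^ 2 := by
    intro e he
    -- pointwise descent
    have hpt : ∀ ω, f (W (e + 1) ω) ≤
        f (W e ω) - η * ⟪f' (W e ω), G e ω⟫ + K * η ^ 2 / 2 * ‖G e ω‖ ^ 2 := by
      intro ω
      have := smooth_descent f f' K hK hdiff hlip (W e ω) (-(η • G e ω))
      rw [hstep ω e he, sub_eq_add_neg]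
      have h1 : ⟪f' (W e ω), -(η • G e ω)⟫ = -(η * ⟪f' (W e ω), G e ω⟫) := by
        rw [inner_neg_right, real_inner_smul_right]
      have h2 : ‖-(η • G e ω)‖ ^ 2 = η ^ 2 * ‖G e ω‖ ^ 2 := by
        rw [norm_neg, norm_smul, mul_pow, Real.norm_eq_abs, sq_abs]
      rw [h1, h2] at this
      linarith
    -- integrability of RHS
    have hi1 : Integrable (fun ω => η * ⟪f' (W e ω), G e ω⟫) μ :=
      (hinner_int e he).const_mul η
    have hi2 : Integrable (fun ω => K * η ^ 2 / 2 * ‖G e ω‖ ^ 2) μ :=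
      (hG_int e he).const_mul _
    have hi3 : Integrable (fun ω => f (W e ω) - η * ⟪f' (W e ω), G e ω⟫) μ :=
      (hf_int e he.le).sub hi1
    have hRHS : Integrable (fun ω =>
        f (W e ω) - η * ⟪f' (W e ω), G e ω⟫ + K * η ^ 2 / 2 * ‖G e ω‖ ^ 2) μ := hi3.add hi2
    have hIneq := integral_mono (hf_int (e + 1) he) hRHS hpt
    rw [integral_add hi3 hi2, integral_sub (hf_int e he.le) hi1,
      integral_const_mul, integral_const_mul, hunbiased e he] at hIneq
    -- bound ∫ ‖G‖² using variance
    have hGdecomp : ∀ ω, ‖G e ω - f' (W e ω)‖ ^ 2 =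
        ‖G e ω‖ ^ 2 - 2 * ⟪f' (W e ω), G e ω⟫ + ‖f' (W e ω)‖ ^ 2 := by
      intro ω
      rw [norm_sub_sq_real, real_inner_comm]
    have hvar_int : ∫ ω, ‖G e ω - f' (W e ω)‖ ^ 2 ∂μ =
        ∫ ω, ‖G e ω‖ ^ 2 ∂μ - 2 * ∫ ω, ⟪f' (W e ω), G e ω⟫ ∂μ
          + ∫ ω, ‖f' (W e ω)‖ ^ 2 ∂μ := by
      have hj1 : Integrable (fun ω => 2 * ⟪f' (W e ω), G e ω⟫) μ :=
        (hinner_int e he).const_mul 2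
      have hj2 : Integrable (fun ω => ‖G e ω‖ ^ 2 - 2 * ⟪f' (W e ω), G e ω⟫) μ :=
        (hG_int e he).sub hj1
      simp_rw [hGdecomp]
      rw [integral_add hj2 (hgrad_int e he), integral_sub (hG_int e he) hj1,
        integral_const_mul]
    have hGbound : ∫ ω, ‖G e ω‖ ^ 2 ∂μ ≤ σ ^ 2 + ∫ ω, ‖f' (W e ω)‖ ^ 2 ∂μ := by
      have := hvar e he
      rw [hvar_int, hunbiased e he] at this
      linarith
    have hKη : 0 ≤ K * η ^ 2 / 2 := by positivity
    nlinarith [mul_le_mul_of_nonneg_left hGbound hKη]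
  -- induction
  have main : ∀ n ≤ E, ∫ ω, f (W n ω) ∂μ ≤
      ∫ ω, f (W 0 ω) ∂μ -
        (η - K * η ^ 2 / 2) * ∑ e ∈ range n, ∫ ω, ‖f' (W e ω)‖ ^ 2 ∂μ +
        (K * n * η ^ 2 / 2) * σ ^ 2 := by
    intro n hn
    induction n with
    | zero => simp
    | succ m ih =>
      have hmE : m < E := hn
      have ihm := ih hmE.le
      have hs := hstep_int m hmE
      rw [Finset.sum_range_succ]
      push_cast
      nlinarith [hs, ihm]
  exact main E le_rfl
end

section
/- Let K ≥ 0, η > 0, ε > 0, σ, Γ, ρ ≥ 0 and L* be real numbers, let E ≥ 1 and T ≥ 1 be natural numbers, and let a : ℕ → ℝ and S : ℕ → ℝ satisfy: S_t ≥ 0 for all t < T; a_T ≥ L*; and for all t < T, a_{t+1} ≤ a_t − (η − K·η²/2)·S_t + (K·E·η²/2)·σ² + 2η·(Γ + ρ²) + K·η²·(2ρ² + σ² + Γ). Set κ = a₀ − L* and D = (2 − K·η)·ε − 3K·η·σ² − 2·(2 + K·η)·Γ − 4·(1 + K·η)·ρ². If D > 0 and T·E·η·D ≥ 2κ, then (1/(T·E))·Σ_{t=0}^{T−1}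 S_t ≤ ε. -/
open Finset

set_option maxHeartbeats 1000000 in
theorem nonconvex_convergence_rate
    (K η ε σ Γ ρ Lstar : ℝ) (hK : 0 ≤ K) (hη : 0 < η) (hε : 0 < ε)
    (hσ : 0 ≤ σ) (hΓ : 0 ≤ Γ) (hρ : 0 ≤ ρ)
    (E T : ℕ) (hE : 1 ≤ E) (hT : 1 ≤ T)
    (a S : ℕ → ℝ)
    (hSnonneg : ∀ t < T, 0 ≤ S t)
    (hlower : Lstar ≤ a T)
    (hrec : ∀ t < T,
      a (t + 1) ≤ a t - (η - K * η ^ 2 / 2) * S t + (K * E * η ^ 2 / 2) * σ ^ 2 +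
        2 * η * (Γ + ρ ^ 2) + K * η ^ 2 * (2 * ρ ^ 2 + σ ^ 2 + Γ))
    (κ D : ℝ) (hκ : κ = a 0 - Lstar)
    (hD : D = (2 - K * η) * ε - 3 * K * η * σ ^ 2 - 2 * (2 + K * η) * Γ -
      4 * (1 + K * η) * ρ ^ 2)
    (hDpos : 0 < D) (hTbig : 2 * κ ≤ (T * E : ℝ) * η * D) :
    (1 / (T * E : ℝ)) * ∑ t ∈ range T, S t ≤ ε := by
  obtain ⟨C, hC⟩ : ∃ C : ℝ, C = (K * E * η ^ 2 / 2) * σ ^ 2 + 2 * η * (Γ + ρ ^ 2) +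
      K * η ^ 2 * (2 * ρ ^ 2 + σ ^ 2 + Γ) := ⟨_, rfl⟩
  have hTr : (1 : ℝ) ≤ (T : ℝ) := by exact_mod_cast hT
  have hEr : (1 : ℝ) ≤ (E : ℝ) := by exact_mod_cast hE
  have h2K : 0 < 2 - K * η := by
    rcases le_or_gt (2 - K * η) 0 with h | h
    · exfalso
      nlinarith [mul_nonneg (mul_nonneg hK hη.le) (sq_nonneg σ),
        mul_nonneg hΓ (mul_nonneg hK hη.le),
        mul_nonneg (sq_nonneg ρ) (mul_nonneg hK hη.le), sq_nonneg ρ]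
    · exact h
  -- telescoping
  have htel : ∀ n ≤ T, a n ≤ a 0 - (η - K * η ^ 2 / 2) * ∑ t ∈ range n, S t + n * C := by
    intro n hn
    induction n with
    | zero => simp
    | succ m ih =>
      have hmT : m < T := hn
      have h1 := ih (le_of_lt hmT)
      have h2 := hrec m hmT
      rw [Finset.sum_range_succ]
      push_cast
      rw [hC]
      nlinarith
  have hmain := htel T le_rfl
  obtain ⟨P, hP⟩ : ∃ P : ℝ, P = ∑ t ∈ range T, S t := ⟨_, rfl⟩
  rw [← hP] at hmain ⊢
  have hSsum : 0 ≤ P := by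
    rw [hP]
    exact Finset.sum_nonneg fun t ht => hSnonneg t (Finset.mem_range.mp ht)
  have hkey : (η - K * η ^ 2 / 2) * P ≤ κ + T * C := by
    rw [hκ]; linarith
  have hTE : (0:ℝ) < (T : ℝ) * E := by nlinarith
  -- step 1: multiply by 2
  have h2 : η * (2 - K * η) * P ≤ 2 * κ + 2 * (T : ℝ) * C := by
    have hre : η * (2 - K * η) * P = 2 * ((η - K * η ^ 2 / 2) * P) := by ring
    linarith [hkey]
  -- step 2: bound 2T*C
  have hCb : 2 * (T : ℝ) * C ≤ (T : ℝ) * E * η * ((2 - K * η) * ε - D) := by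
    rw [hD, hC]
    have hEm : 0 ≤ (E : ℝ) - 1 := by linarith
    have hTm : 0 ≤ (T : ℝ) := by linarith
    have key : 2 * C ≤ (E : ℝ) * η * ((2 - K * η) * ε - ((2 - K * η) * ε -
        3 * K * η * σ ^ 2 - 2 * (2 + K * η) * Γ - 4 * (1 + K * η) * ρ ^ 2)) := by
      rw [hC]
      nlinarith [mul_nonneg (mul_nonneg (mul_nonneg hK (sq_nonneg η)) (sq_nonneg σ)) hEm,
        mul_nonneg (mul_nonneg hη.le hΓ) hEm,
        mul_nonneg (mul_nonneg hη.le (sq_nonneg ρ)) hEm,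
        mul_nonneg (mul_nonneg (mul_nonneg hK (sq_nonneg η)) hΓ) hEm,
        mul_nonneg (mul_nonneg (mul_nonneg hK (sq_nonneg η)) (sq_nonneg ρ)) hEm]
    rw [hC] at key
    nlinarith [mul_le_mul_of_nonneg_left key hTm]
  have hstep : η * (2 - K * η) * P ≤ (T : ℝ) * E * η * ((2 - K * η) * ε) := by
    nlinarith [h2, hCb, hTbig]
  have hfinal : P ≤ (T : ℝ) * E * ε := by
    have hpos : 0 < η * (2 - K * η) := mul_pos hη h2K
    have hre : (T : ℝ) * E * η * ((2 - K * η) * ε) = η * (2 - K * η) * ((T : ℝ) * E * ε) := by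
      ring
    rw [hre] at hstep
    exact le_of_mul_le_mul_left hstep hpos
  rw [div_mul_eq_mul_div, one_mul, div_le_iff₀ hTE]
  linarith [hfinal]
end
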